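/- Let g : ℤ_p → ℤ_p be 1-Lipschitz with van der Put coefficients B̃_m and let f = Δg, where Δg(x) = g(x+1) − g(x), with van der Put coefficients B_m. Then: B_m = B̃_{m+1} − B̃_m for 0 ≤ m ≤ p−2; B_{p−1} = B̃_p + B̃_0 − B̃_{p−1}; for p^{n−1} ≤ m ≤ p^n − 1 (n ≥ 2), B_m = B̃_{m+1} − B̃_m if m ≠ p^{n−1} − 1 + m_{n−1}p^{n−1}, and B_m = B̃_{m+1} − B̃_m − B̃_{p^{n−1}} if m = p^{n−1} − 1 + m_{n−1}p^{n−1} with 1 ≤ m_{n−1} ≤ p−1. -/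

import Mathlib

open MeasureTheory Finset

namespace VDP

noncomputable instance (p : ℕ) [Fact p.Prime] : MeasurableSpace ℤ_[p] := borel _
instance (p : ℕ) [Fact p.Prime] : BorelSpace ℤ_[p] := ⟨rfl⟩

/-- The Haar probability measure on `ℤ_[p]`. -/
noncomputable def haarZp (p : ℕ) [Fact p.Prime] : Measure ℤ_[p] :=
  Measure.addHaarMeasure ⊤

/-- `f` is 1-Lipschitz. -/
def IsLip (p : ℕ) [Fact p.Prime] (f : ℤ_[p] → ℤ_[p]) : Prop :=
  ∀ x y : ℤ_[p], ‖f x - f y‖ ≤ ‖x - y‖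

/-- The van der Put basis function `χ(m, x)` on `ℤ_[p]` (with `⌊log_p 0⌋ = 0`). -/
noncomputable def chi (p : ℕ) [Fact p.Prime] (m : ℕ) (x : ℤ_[p]) : ℤ_[p] :=
  if ‖x - (m : ℤ_[p])‖ ≤ ((p : ℝ) ^ (Nat.log p m + 1))⁻¹ then 1 else 0

/-- `q(m) = m_s p^s`, the leading term of the `p`-adic expansion of `m`. -/
def q (p m : ℕ) : ℕ := m / p ^ Nat.log p m * p ^ Nat.log p m

/-- `f` has van der Put expansion with coefficients `B`. -/
def vdpExpansion (p : ℕ) [Fact p.Prime] (f : ℤ_[p] → ℤ_[p]) (B : ℕ → ℤ_[p]) : Prop :=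
  ∀ x, f x = ∑' m, B m * chi p m x

/-- `f` is bijective modulo `p^n`. -/
def BijModPow (p : ℕ) [Fact p.Prime] (f : ℤ_[p] → ℤ_[p]) (n : ℕ) : Prop :=
  Function.Bijective fun a : ZMod (p ^ n) => PadicInt.toZModPow n (f ((a.val : ℕ) : ℤ_[p]))

/-- `f` is transitive modulo `p^n`. -/
def TransModPow (p : ℕ) [Fact p.Prime] (f : ℤ_[p] → ℤ_[p]) (n : ℕ) : Prop :=
  ∀ x : ℤ_[p], ∀ a : ZMod (p ^ n), ∃ k : ℕ, PadicInt.toZModPow n (f^[k] x) = a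

/-- The `i`-th digit of the canonical `p`-adic expansion of `x`. -/
noncomputable def digit (p : ℕ) [Fact p.Prime] (x : ℤ_[p]) (i : ℕ) : ℕ :=
  x.appr (i + 1) / p ^ i % p

end VDP


open VDP

section aux
variable {p : ℕ} [hp : Fact p.Prime]

lemma chi_nat (m k : ℕ) :
    chi p m (k : ℤ_[p]) = if ((p:ℤ) ^ (Nat.log p m + 1)) ∣ ((k:ℤ) - (m:ℤ)) then 1 else 0 := by
  have h1 : ((k : ℤ_[p]) - (m:ℤ_[p])) = (((k:ℤ) - (m:ℤ) : ℤ) : ℤ_[p]) := by push_cast; ring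
  have h2 : ((p : ℝ) ^ (Nat.log p m + 1))⁻¹ = (p:ℝ) ^ (-(Nat.log p m + 1 : ℕ) : ℤ) := by
    rw [zpow_neg]; norm_cast
  have key : ‖(((k:ℤ) - (m:ℤ) : ℤ) : ℤ_[p])‖ ≤ (p:ℝ) ^ (-(Nat.log p m + 1 : ℕ) : ℤ) ↔
      ((p:ℤ) ^ (Nat.log p m + 1)) ∣ ((k:ℤ) - (m:ℤ)) := by
    exact PadicInt.norm_int_le_pow_iff_dvd
  rw [chi, h1, h2]
  exact if_congr key rfl rfl

lemma chi_nat_zero_of_lt {m k : ℕ} (h : k < m) : chi p m (k : ℤ_[p]) = 0 := by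
  rw [chi_nat, if_neg]
  intro hd
  have hm : m < p ^ (Nat.log p m + 1) := Nat.lt_pow_succ_log_self hp.out.one_lt m
  zify at hm
  have : ((k:ℤ) - m) = 0 := Int.eq_zero_of_abs_lt_dvd hd (by rw [abs_lt]; push_cast; omega)
  omega

lemma chi_nat_self (m : ℕ) : chi p m (m : ℤ_[p]) = 1 := by
  rw [chi_nat, if_pos] ; simp

lemma vdp_eval {f : ℤ_[p] → ℤ_[p]} {B : ℕ → ℤ_[p]} (h : vdpExpansion p f B) (k N : ℕ)
    (hk : k < N) : f (k : ℤ_[p]) = ∑ m ∈ Finset.range N, B m * chi p m (k : ℤ_[p]) := by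
  rw [h]
  apply tsum_eq_sum
  intro m hm
  rw [chi_nat_zero_of_lt (by simp at hm; omega), mul_zero]

lemma coeff_lt {f : ℤ_[p] → ℤ_[p]} {B : ℕ → ℤ_[p]} (h : vdpExpansion p f B) {m : ℕ}
    (hm : m < p) : B m = f (m : ℤ_[p]) := by
  rw [vdp_eval h m (m+1) (by omega)]
  rw [Finset.sum_eq_single m]
  · rw [chi_nat_self, mul_one]
  · intro b hb hbm
    simp only [Finset.mem_range] at hb
    have hb' : b < m := by omega
    have : Nat.log p b = 0 := Nat.log_eq_zero_iff.mpr (Or.inl (by omega))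
    rw [chi_nat, this, if_neg, mul_zero]
    intro hd
    have hd' : ((p:ℤ)) ^ (0+1) ∣ (m:ℤ) - b := hd
    rw [show ((p:ℤ)) ^ (0+1) = (p:ℤ) by ring] at hd'
    have : ((m:ℤ) - b) = 0 := Int.eq_zero_of_abs_lt_dvd hd' (by rw [abs_lt]; push_cast; omega)
    omega
  · simp

lemma coeff_ge {f : ℤ_[p] → ℤ_[p]} {B : ℕ → ℤ_[p]} (h : vdpExpansion p f B) {m : ℕ}
    (hm : p ≤ m) :
    B m = f (m : ℤ_[p]) - f ((m % p ^ Nat.log p m : ℕ) : ℤ_[p]) := by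
  have hp1 : 1 < p := hp.out.one_lt
  set L := Nat.log p m with hL
  have hL1 : 1 ≤ L := Nat.log_pos hp1 hm
  have hpL : p ^ L ≤ m := Nat.pow_log_le_self p (by omega)
  have hmlt : m < p ^ (L + 1) := Nat.lt_pow_succ_log_self hp1 m
  obtain ⟨r, hr⟩ : ∃ r, r = m % p ^ L := ⟨_, rfl⟩
  rw [← hr]
  have hrlt : r < p ^ L := hr ▸ Nat.mod_lt _ (by positivity)
  have hdvd : (p:ℤ) ^ L ∣ (m:ℤ) - r := by
    have h2 : p ^ L ∣ m - r := hr ▸ Nat.dvd_sub_mod m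
    have h1 : r ≤ m := hr ▸ Nat.mod_le _ _
    zify [h1] at h2
    exact h2
  rw [vdp_eval h m (m+1) (by omega), vdp_eval h r (m+1) (by omega), ← Finset.sum_sub_distrib]
  rw [Finset.sum_eq_single m]
  · rw [chi_nat_self, chi_nat_zero_of_lt (by omega : r < m), mul_one, mul_zero, sub_zero]
  · intro b hb hbm
    have heq : chi p b (m : ℤ_[p]) = chi p b (r : ℤ_[p]) := by
      rw [chi_nat, chi_nat]
      set L' := Nat.log p b with hL'
      congr 1
      apply propext
      by_cases hc : L' + 1 ≤ L
      · have hd2 : (p:ℤ) ^ (L' + 1) ∣ (m:ℤ) - r := dvd_trans (pow_dvd_pow _ hc) hdvd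
        constructor
        · intro hx; have := dvd_sub hd2 hx; rw [show (m:ℤ) - r - ((m:ℤ) - b) = (b:ℤ) - r by ring] at this
          have := dvd_neg.mpr this; rw [neg_sub] at this; exact this
        · intro hx; have := dvd_add hd2 hx; rw [show (m:ℤ) - r + ((r:ℤ) - b) = (m:ℤ) - b by ring] at this; exact this
      · have hLL : L ≤ L' := by omega
        have hple : p ^ (L+1) ≤ p ^ (L'+1) := Nat.pow_le_pow_right (by omega) (by omega)
        have hblt : b < p ^ (L' + 1) := Nat.lt_pow_succ_log_self hp1 b
        constructor
        · intro hx
          exfalso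
          have hmlt' := hmlt; have hple' := hple; have hblt' := hblt
          zify at hmlt' hple' hblt'
          have : ((m:ℤ) - b) = 0 := Int.eq_zero_of_abs_lt_dvd hx (by rw [abs_lt]; omega)
          omega
        · intro hx
          exfalso
          have hrle : p ^ L ≤ p ^ (L' + 1) := Nat.pow_le_pow_right (by omega) (by omega)
          have hrlt' := hrlt; have hblt' := hblt
          zify at hrle hrlt' hblt'
          have hc1 : ((p ^ L : ℕ) : ℤ) = (p:ℤ) ^ L := by push_cast; ring
          have hc2 : ((p ^ (L' + 1) : ℕ) : ℤ) = (p:ℤ) ^ (L' + 1) := by push_cast; ring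
          have hbr : ((r:ℤ) - b) = 0 := Int.eq_zero_of_abs_lt_dvd hx (by rw [abs_lt]; omega)
          have hbr' : b = r := by omega
          -- then L' = log p r < L, contradiction with hLL
          rcases Nat.eq_zero_or_pos r with h0 | h0
          · rw [hbr', h0] at hL'; simp [Nat.log_zero_right] at hL'; omega
          · have : Nat.log p b < L := by
              rw [hbr']; exact Nat.log_lt_of_lt_pow (by omega) hrlt
            omega
    rw [heq, sub_self]
  · simp

end aux

open VDP in
theorem stmt9 (p : ℕ) [Fact p.Prime] (g : ℤ_[p] → ℤ_[p]) (Bt B : ℕ → ℤ_[p])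
    (hg : IsLip p g) (hBt : vdpExpansion p g Bt)
    (hB : vdpExpansion p (fun x => g (x + 1) - g x) B) :
    (∀ m : ℕ, m ≤ p - 2 → B m = Bt (m + 1) - Bt m) ∧
      B (p - 1) = Bt p + Bt 0 - Bt (p - 1) ∧
      (∀ n : ℕ, 2 ≤ n → ∀ m : ℕ, p ^ (n - 1) ≤ m → m ≤ p ^ n - 1 →
        (m % p ^ (n - 1) ≠ p ^ (n - 1) - 1 → B m = Bt (m + 1) - Bt m) ∧
          (m % p ^ (n - 1) = p ^ (n - 1) - 1 →
            B m = Bt (m + 1) - Bt m - Bt (p ^ (n - 1)))) := by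
  have hp1 : 1 < p := Nat.Prime.one_lt Fact.out
  have hc : ∀ k : ℕ, ((k : ℤ_[p]) + 1) = ((k + 1 : ℕ) : ℤ_[p]) := by
    intro k; push_cast; ring
  have hBlt : ∀ m : ℕ, m < p → B m = g ((m + 1 : ℕ) : ℤ_[p]) - g (m : ℤ_[p]) := by
    intro m h
    have := coeff_lt hB h
    rw [this, hc]
  have hBge : ∀ m : ℕ, p ≤ m → B m = (g ((m + 1 : ℕ) : ℤ_[p]) - g (m : ℤ_[p])) -
      (g ((m % p ^ Nat.log p m + 1 : ℕ) : ℤ_[p]) - g ((m % p ^ Nat.log p m : ℕ) : ℤ_[p])) := by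
    intro m h
    have := coeff_ge hB h
    rw [this, hc, hc]
  have hBtlt : ∀ m : ℕ, m < p → Bt m = g (m : ℤ_[p]) := fun m h => coeff_lt hBt h
  have hBtge : ∀ m : ℕ, p ≤ m →
      Bt m = g (m : ℤ_[p]) - g ((m % p ^ Nat.log p m : ℕ) : ℤ_[p]) :=
    fun m h => coeff_ge hBt h
  refine ⟨?_, ?_, ?_⟩
  · intro m hm
    rw [hBlt m (by omega), hBtlt (m + 1) (by omega), hBtlt m (by omega)]
  · have hlogp : Nat.log p p = 1 :=
      Nat.log_eq_of_pow_le_of_lt_pow (by simpa using le_rfl)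
        (by nlinarith [pow_succ p 1])
    have hmod : p % p ^ Nat.log p p = 0 := by rw [hlogp, pow_one, Nat.mod_self]
    rw [hBlt (p - 1) (by omega), hBtlt (p - 1) (by omega), hBtlt 0 (by omega),
      hBtge p le_rfl, hmod, show p - 1 + 1 = p by omega]
    simp only [Nat.cast_zero]
    abel
  · intro n hn m hm1 hm2
    have hL1 : 1 ≤ n - 1 := by omega
    have hppow : p ≤ p ^ (n - 1) := by
      calc p = p ^ 1 := (pow_one p).symm
      _ ≤ p ^ (n - 1) := Nat.pow_le_pow_right (by omega) hL1
    have hpm : p ≤ m := le_trans hppow hm1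
    have hpnpos : 1 ≤ p ^ n := Nat.one_le_pow _ _ (by omega)
    have hmlt : m < p ^ n := by omega
    have hpn : p ^ n = p ^ (n - 1) * p := by
      rw [← pow_succ]; congr 1; omega
    have hlog : Nat.log p m = n - 1 :=
      Nat.log_eq_of_pow_le_of_lt_pow hm1 (by rw [show n - 1 + 1 = n by omega]; exact hmlt)
    have hpLpos : 0 < p ^ (n - 1) := by omega
    have hrlt : m % p ^ (n - 1) < p ^ (n - 1) := Nat.mod_lt _ hpLpos
    constructor
    · intro hne
      have hm1n : m + 1 < p ^ n := by
        rcases Nat.lt_or_ge (m + 1) (p ^ n) with h | h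
        · exact h
        · exfalso
          have hmeq : m = p ^ n - 1 := by omega
          apply hne
          have hmul : p ^ (n - 1) * (p - 1) + p ^ (n - 1) = p ^ (n - 1) * p := by
            rw [← Nat.mul_succ]; congr 1; omega
          rw [hmeq, hpn, show p ^ (n - 1) * p - 1 =
            p ^ (n - 1) * (p - 1) + (p ^ (n - 1) - 1) by omega]
          rw [Nat.mul_add_mod, Nat.mod_eq_of_lt (by omega)]
      have hlog2 : Nat.log p (m + 1) = n - 1 :=
        Nat.log_eq_of_pow_le_of_lt_pow (by omega)
          (by rw [show n - 1 + 1 = n by omega]; exact hm1n)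
      have hmod2 : (m + 1) % p ^ (n - 1) = m % p ^ (n - 1) + 1 := by
        conv_lhs => rw [← Nat.div_add_mod m (p ^ (n - 1))]
        rw [add_assoc, Nat.mul_add_mod]
        exact Nat.mod_eq_of_lt (by omega)
      rw [hBge m hpm, hBtge (m + 1) (by omega), hBtge m hpm, hlog, hlog2, hmod2]
      abel
    · intro heq
      have hmodm1 : (m + 1) % p ^ Nat.log p (m + 1) = 0 := by
        have hd : p ^ (n - 1) ∣ m + 1 := by
          have := Nat.div_add_mod m (p ^ (n - 1))
          have h2 : p ^ (n - 1) * (m / p ^ (n - 1) + 1) =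
            p ^ (n - 1) * (m / p ^ (n - 1)) + p ^ (n - 1) := by ring
          exact ⟨m / p ^ (n - 1) + 1, by omega⟩
        rcases Nat.lt_or_ge (m + 1) (p ^ n) with h | h
        · have : Nat.log p (m + 1) = n - 1 :=
            Nat.log_eq_of_pow_le_of_lt_pow (by omega)
              (by rw [show n - 1 + 1 = n by omega]; exact h)
          rw [this]
          exact Nat.dvd_iff_mod_eq_zero.mp hd
        · have hm1e : m + 1 = p ^ n := by omega
          rw [hm1e, Nat.log_pow hp1, Nat.mod_self]
      have hBtm1 : Bt (m + 1) = g ((m + 1 : ℕ) : ℤ_[p]) - g 0 := by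
        rw [hBtge (m + 1) (by omega), hmodm1, Nat.cast_zero]
      have hBtpL : Bt (p ^ (n - 1)) = g ((p ^ (n - 1) : ℕ) : ℤ_[p]) - g 0 := by
        rw [hBtge (p ^ (n - 1)) hppow, Nat.log_pow hp1, Nat.mod_self, Nat.cast_zero]
      rw [hBge m hpm, hBtge m hpm, hBtm1, hBtpL, hlog, heq,
        show p ^ (n - 1) - 1 + 1 = p ^ (n - 1) by omega]
      abel
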